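/- Fix p > 1, α ∈ (0,1), and a continuous non-decreasing τ : [0,1] → [0,∞) with τ(0) = 0. Assume the class V^{p,τ}_𝕋 ∩ C^α([0,1]) of α-Hölder continuous functions whose dyadic p-th variation equals τ is nonempty, and assume that adding a function that is piecewise linear with breakpoints in a dyadic level 𝕋^n does not change the dyadic p-th variation. Then V^{p,τ}_𝕋 ∩ C^α([0,1]) is dense in C([0,1]) with the uniform norm. -/

import Mathlib

/-- Discrete p-th variation of `x` along the n-th dyadic partition, stopped at `t`. -/
noncomputable def dyadicPVar (p : ℝ) (x : ℝ → ℝ) (n : ℕ) (t : ℝ) : ℝ :=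
  ∑ j ∈ Finset.range (2 ^ n),
    |x (min (((j : ℝ) + 1) / 2 ^ n) t) - x (min ((j : ℝ) / 2 ^ n) t)| ^ p

/-- `w` is piecewise linear on `[0,1]` with breakpoints in the level-`n` dyadic grid. -/
def PiecewiseLinearDyadic (w : ℝ → ℝ) (n : ℕ) : Prop :=
  ∀ i < 2 ^ n, ∀ t ∈ Set.Icc ((i : ℝ) / 2 ^ n) (((i : ℝ) + 1) / 2 ^ n),
    w t = w ((i : ℝ) / 2 ^ n) +
      (t - (i : ℝ) / 2 ^ n) * 2 ^ n *
        (w (((i : ℝ) + 1) / 2 ^ n) - w ((i : ℝ) / 2 ^ n))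



noncomputable def plInterp (g : ℝ → ℝ) (n : ℕ) (t : ℝ) : ℝ :=
  g 0 + ∑ j ∈ Finset.range (2 ^ n),
    (2 ^ n * (g (((j : ℝ) + 1) / 2 ^ n) - g ((j : ℝ) / 2 ^ n))) *
      (min t (((j : ℝ) + 1) / 2 ^ n) - min t ((j : ℝ) / 2 ^ n))

lemma plInterp_continuous (g : ℝ → ℝ) (n : ℕ) : Continuous (plInterp g n) := by
  unfold plInterp
  fun_prop

lemma min_lip (a s t : ℝ) : |min t a - min s a| ≤ |t - s| := by
  rcases le_total t a with h1 | h1 <;> rcases le_total s a with h2 | h2 <;>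
    simp [min_eq_left, min_eq_right, h1, h2, abs_le] <;>
    cases abs_le.mp (le_refl |t - s|) <;> constructor <;> nlinarith [abs_nonneg (t - s), le_abs_self (t - s), neg_abs_le (t - s)]

lemma plInterp_lip (g : ℝ → ℝ) (n : ℕ) :
    ∃ L : ℝ, 0 ≤ L ∧ ∀ s t : ℝ, |plInterp g n t - plInterp g n s| ≤ L * |t - s| := by
  refine ⟨∑ j ∈ Finset.range (2 ^ n),
    |2 ^ n * (g (((j : ℝ) + 1) / 2 ^ n) - g ((j : ℝ) / 2 ^ n))| * 2,
    Finset.sum_nonneg fun j _ => by positivity, fun s t => ?_⟩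
  unfold plInterp
  rw [Finset.sum_mul]
  have : g 0 + ∑ j ∈ Finset.range (2 ^ n),
      (2 ^ n * (g (((j : ℝ) + 1) / 2 ^ n) - g ((j : ℝ) / 2 ^ n))) *
        (min t (((j : ℝ) + 1) / 2 ^ n) - min t ((j : ℝ) / 2 ^ n)) -
      (g 0 + ∑ j ∈ Finset.range (2 ^ n),
      (2 ^ n * (g (((j : ℝ) + 1) / 2 ^ n) - g ((j : ℝ) / 2 ^ n))) *
        (min s (((j : ℝ) + 1) / 2 ^ n) - min s ((j : ℝ) / 2 ^ n))) =
      ∑ j ∈ Finset.range (2 ^ n),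
      (2 ^ n * (g (((j : ℝ) + 1) / 2 ^ n) - g ((j : ℝ) / 2 ^ n))) *
        ((min t (((j : ℝ) + 1) / 2 ^ n) - min t ((j : ℝ) / 2 ^ n)) -
         (min s (((j : ℝ) + 1) / 2 ^ n) - min s ((j : ℝ) / 2 ^ n))) := by
    rw [add_sub_add_left_eq_sub, ← Finset.sum_sub_distrib]
    exact Finset.sum_congr rfl fun j _ => by ring
  rw [this]
  refine (Finset.abs_sum_le_sum_abs _ _).trans (Finset.sum_le_sum fun j _ => ?_)
  rw [abs_mul, mul_assoc]
  refine mul_le_mul_of_nonneg_left ?_ (abs_nonneg _)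
  calc |min t (((j : ℝ) + 1) / 2 ^ n) - min t ((j : ℝ) / 2 ^ n) -
      (min s (((j : ℝ) + 1) / 2 ^ n) - min s ((j : ℝ) / 2 ^ n))|
      ≤ |min t (((j : ℝ) + 1) / 2 ^ n) - min s (((j : ℝ) + 1) / 2 ^ n)| +
        |min t ((j : ℝ) / 2 ^ n) - min s ((j : ℝ) / 2 ^ n)| := by
        have := abs_sub (min t (((j : ℝ) + 1) / 2 ^ n) - min s (((j : ℝ) + 1) / 2 ^ n))
          (min t ((j : ℝ) / 2 ^ n) - min s ((j : ℝ) / 2 ^ n))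
        calc _ = |(min t (((j : ℝ) + 1) / 2 ^ n) - min s (((j : ℝ) + 1) / 2 ^ n)) -
            (min t ((j : ℝ) / 2 ^ n) - min s ((j : ℝ) / 2 ^ n))| := by ring_nf
        _ ≤ _ := abs_sub _ _
    _ ≤ |t - s| + |t - s| := add_le_add (min_lip _ _ _) (min_lip _ _ _)
    _ = 2 * |t - s| := by ring


lemma plInterp_eval (g : ℝ → ℝ) (n : ℕ) (i : ℕ) (hi : i < 2 ^ n) (t : ℝ)
    (ht : t ∈ Set.Icc ((i : ℝ) / 2 ^ n) (((i : ℝ) + 1) / 2 ^ n)) :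
    plInterp g n t = g ((i : ℝ) / 2 ^ n) +
      (t - (i : ℝ) / 2 ^ n) * 2 ^ n * (g (((i : ℝ) + 1) / 2 ^ n) - g ((i : ℝ) / 2 ^ n)) := by
  have h2 : (0 : ℝ) < 2 ^ n := by positivity
  obtain ⟨ht1, ht2⟩ := ht
  unfold plInterp
  rw [← Finset.sum_range_add_sum_Ico _ (Nat.succ_le_of_lt hi), Finset.sum_range_succ]
  have hIco : ∑ j ∈ Finset.Ico (i + 1) (2 ^ n),
      (2 ^ n * (g (((j : ℝ) + 1) / 2 ^ n) - g ((j : ℝ) / 2 ^ n))) *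
        (min t (((j : ℝ) + 1) / 2 ^ n) - min t ((j : ℝ) / 2 ^ n)) = 0 := by
    refine Finset.sum_eq_zero fun j hj => ?_
    obtain ⟨hj1, _⟩ := Finset.mem_Ico.mp hj
    have hji : ((i : ℝ) + 1) ≤ (j : ℝ) := by exact_mod_cast hj1
    have ha : min t ((j : ℝ) / 2 ^ n) = t :=
      min_eq_left (ht2.trans (by gcongr))
    have hb : min t (((j : ℝ) + 1) / 2 ^ n) = t :=
      min_eq_left (ht2.trans (by gcongr; linarith))
    rw [ha, hb]; ring
  have hlow : ∑ j ∈ Finset.range i,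
      (2 ^ n * (g (((j : ℝ) + 1) / 2 ^ n) - g ((j : ℝ) / 2 ^ n))) *
        (min t (((j : ℝ) + 1) / 2 ^ n) - min t ((j : ℝ) / 2 ^ n)) =
      g ((i : ℝ) / 2 ^ n) - g ((0 : ℕ) / 2 ^ n) := by
    rw [← Finset.sum_range_sub (fun k : ℕ => g ((k : ℝ) / 2 ^ n)) i]
    refine Finset.sum_congr rfl fun j hj => ?_
    have hj' : j < i := Finset.mem_range.mp hj
    have hji : ((j : ℝ) + 1) ≤ (i : ℝ) := by exact_mod_cast hj'
    have ha : min t ((j : ℝ) / 2 ^ n) = (j : ℝ) / 2 ^ n :=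
      min_eq_right ((by gcongr <;> linarith : ((j : ℝ)) / 2 ^ n ≤ (i : ℝ) / 2 ^ n).trans ht1)
    have hb : min t (((j : ℝ) + 1) / 2 ^ n) = ((j : ℝ) + 1) / 2 ^ n :=
      min_eq_right ((by gcongr : ((j : ℝ) + 1) / 2 ^ n ≤ (i : ℝ) / 2 ^ n).trans ht1)
    rw [ha, hb]
    push_cast
    field_simp
    ring
  have hmid1 : min t (((i : ℝ) + 1) / 2 ^ n) = t := min_eq_left ht2
  have hmid2 : min t ((i : ℝ) / 2 ^ n) = (i : ℝ) / 2 ^ n := min_eq_right ht1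
  rw [hIco, hlow, hmid1, hmid2]
  push_cast
  ring

lemma plInterp_grid (g : ℝ → ℝ) (n : ℕ) (k : ℕ) (hk : k ≤ 2 ^ n) :
    plInterp g n ((k : ℝ) / 2 ^ n) = g ((k : ℝ) / 2 ^ n) := by
  have h2 : (0 : ℝ) < 2 ^ n := by positivity
  rcases lt_or_eq_of_le hk with hk' | hk'
  · rw [plInterp_eval g n k hk' _ ⟨le_refl _, by gcongr <;> linarith⟩]
    ring
  · have hk1 : 0 < k := by rw [hk']; exact Nat.two_pow_pos n
    have : k - 1 < 2 ^ n := by omega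
    have hcast : ((k : ℝ)) = ((k - 1 : ℕ) : ℝ) + 1 := by
      have : (k - 1 : ℕ) + 1 = k := by omega
      exact_mod_cast (congrArg (fun m : ℕ => (m : ℝ)) this).symm
    rw [hcast, plInterp_eval g n (k - 1) this _
      ⟨by gcongr; linarith, le_refl _⟩]
    field_simp
    ring

lemma min_lip' (a s t : ℝ) : |min t a - min s a| ≤ |t - s| := by
  rcases le_total t a with h1 | h1 <;> rcases le_total s a with h2 | h2 <;>
    simp [min_eq_left, min_eq_right, h1, h2, abs_le] <;> constructor <;>
      nlinarith [le_abs_self (t - s), neg_abs_le (t - s)]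

lemma dyadicPVar_nonneg (p : ℝ) (x : ℝ → ℝ) (n : ℕ) (t : ℝ) : 0 ≤ dyadicPVar p x n t :=
  Finset.sum_nonneg fun j _ => Real.rpow_nonneg (abs_nonneg _) _

lemma add_lip_pvar (p : ℝ) (hp : 1 < p) (z w : ℝ → ℝ) (L : ℝ) (hL : 0 ≤ L)
    (hw : ∀ s t : ℝ, |w t - w s| ≤ L * |t - s|) (V : ℝ → ℝ) (t : ℝ)
    (hz : Filter.Tendsto (fun m => dyadicPVar p z m t) Filter.atTop (nhds (V t))) :
    Filter.Tendsto (fun m => dyadicPVar p (fun u => z u + w u) m t)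
      Filter.atTop (nhds (V t)) := by
  have hp0 : (0 : ℝ) < p := lt_trans one_pos hp
  have hp1 : (0 : ℝ) < 1 / p := by positivity
  -- the p-variation of w along level m, stopped at t
  set H : ℕ → ℝ := fun m => dyadicPVar p w m t with hH
  have hHbound : ∀ m, H m ≤ L ^ p * ((2 : ℝ) ^ ((1 : ℝ) - p)) ^ m := by
    intro m
    have h2m : (0 : ℝ) < 2 ^ m := by positivity
    have hterm : ∀ j ∈ Finset.range (2 ^ m),
        |w (min (((j : ℝ) + 1) / 2 ^ m) t) - w (min ((j : ℝ) / 2 ^ m) t)| ^ p ≤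
          (L * (1 / 2 ^ m)) ^ p := by
      intro j _
      have h1 : |w (min (((j : ℝ) + 1) / 2 ^ m) t) - w (min ((j : ℝ) / 2 ^ m) t)| ≤
          L * (1 / 2 ^ m) := by
        refine (hw _ _).trans ?_
        have h3 : |min (((j : ℝ) + 1) / 2 ^ m) t - min ((j : ℝ) / 2 ^ m) t| ≤
            |(((j : ℝ) + 1) / 2 ^ m) - ((j : ℝ) / 2 ^ m)| := min_lip' t _ _
        have h2 : |(((j : ℝ) + 1) / 2 ^ m) - ((j : ℝ) / 2 ^ m)| = 1 / 2 ^ m := by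
          rw [show (((j : ℝ) + 1) / 2 ^ m) - ((j : ℝ) / 2 ^ m) = 1 / 2 ^ m by ring,
            abs_of_nonneg (by positivity)]
        refine mul_le_mul_of_nonneg_left ?_ hL
        rw [h2] at h3
        exact h3
      exact Real.rpow_le_rpow (abs_nonneg _) h1 hp0.le
    have hsum : H m ≤ (2 ^ m : ℕ) • ((L * (1 / 2 ^ m)) ^ p) := by
      rw [hH]
      simpa [dyadicPVar] using Finset.sum_le_card_nsmul _ _ _ hterm
    rw [nsmul_eq_mul] at hsum
    refine hsum.trans_eq ?_
    have key : ((2 : ℝ) ^ m : ℝ) * ((1 / (2 : ℝ) ^ m)) ^ p = ((2 : ℝ) ^ ((1 : ℝ) - p)) ^ m := by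
      have e1 : ((2 : ℝ) ^ ((1 : ℝ) - p)) ^ m = (2 : ℝ) ^ (((1 : ℝ) - p) * m) := by
        rw [← Real.rpow_natCast ((2 : ℝ) ^ ((1 : ℝ) - p)) m, ← Real.rpow_mul (by norm_num)]
      rw [e1, one_div, ← Real.rpow_natCast (2 : ℝ) m, ← Real.rpow_neg (by positivity),
        ← Real.rpow_mul (by norm_num), ← Real.rpow_add (by norm_num)]
      rw [show (m : ℝ) + -(m : ℝ) * p = ((1 : ℝ) - p) * m by ring]
    push_cast
    rw [Real.mul_rpow hL (by positivity), ← mul_assoc, mul_comm ((2:ℝ) ^ (m:ℕ) : ℝ) (L ^ p),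
      mul_assoc, key]
  have hHtend : Filter.Tendsto H Filter.atTop (nhds 0) := by
    have hr : |(2 : ℝ) ^ ((1 : ℝ) - p)| < 1 := by
      rw [abs_of_pos (Real.rpow_pos_of_pos two_pos _)]
      exact Real.rpow_lt_one_of_one_lt_of_neg one_lt_two (by linarith)
    have := tendsto_pow_atTop_nhds_zero_of_abs_lt_one hr
    have h2 := this.const_mul (L ^ p)
    rw [mul_zero] at h2
    exact squeeze_zero (fun m => dyadicPVar_nonneg p w m t) hHbound h2
  have hHp : Filter.Tendsto (fun m => H m ^ (1 / p)) Filter.atTop (nhds 0) := by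
    have := hHtend.rpow_const (p := 1 / p) (Or.inr hp1.le)
    rwa [Real.zero_rpow (ne_of_gt hp1)] at this
  -- Minkowski both ways
  set S : ℕ → ℝ := fun m => dyadicPVar p z m t with hS
  set T : ℕ → ℝ := fun m => dyadicPVar p (fun u => z u + w u) m t with hT
  have hmink1 : ∀ m, T m ^ (1 / p) ≤ S m ^ (1 / p) + H m ^ (1 / p) := by
    intro m
    have := Real.Lp_add_le (Finset.range (2 ^ m))
      (fun j => z (min (((j : ℝ) + 1) / 2 ^ m) t) - z (min ((j : ℝ) / 2 ^ m) t))
      (fun j => w (min (((j : ℝ) + 1) / 2 ^ m) t) - w (min ((j : ℝ) / 2 ^ m) t)) hp.le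
    simp only [hT, hS, hH, dyadicPVar]
    refine le_trans (le_of_eq ?_) this
    congr 1
    refine Finset.sum_congr rfl fun j _ => ?_
    congr 2
    ring
  have hmink2 : ∀ m, S m ^ (1 / p) ≤ T m ^ (1 / p) + H m ^ (1 / p) := by
    intro m
    have := Real.Lp_add_le (Finset.range (2 ^ m))
      (fun j => (z (min (((j : ℝ) + 1) / 2 ^ m) t) + w (min (((j : ℝ) + 1) / 2 ^ m) t)) -
        (z (min ((j : ℝ) / 2 ^ m) t) + w (min ((j : ℝ) / 2 ^ m) t)))
      (fun j => -(w (min (((j : ℝ) + 1) / 2 ^ m) t) - w (min ((j : ℝ) / 2 ^ m) t))) hp.le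
    simp only [hT, hS, hH, dyadicPVar]
    refine le_trans (le_of_eq ?_) (this.trans (le_of_eq ?_))
    · congr 1
      refine Finset.sum_congr rfl fun j _ => ?_
      congr 2
      ring
    · congr 2
      refine Finset.sum_congr rfl fun j _ => ?_
      rw [abs_neg]
  -- S^{1/p} tends to (V t)^{1/p}
  have hSp : Filter.Tendsto (fun m => S m ^ (1 / p)) Filter.atTop (nhds ((V t) ^ (1 / p))) :=
    hz.rpow_const (Or.inr hp1.le)
  -- T^{1/p} tends to (V t)^{1/p} by squeeze
  have hTp : Filter.Tendsto (fun m => T m ^ (1 / p)) Filter.atTop (nhds ((V t) ^ (1 / p))) := by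
    have hup : Filter.Tendsto (fun m => S m ^ (1 / p) + H m ^ (1 / p)) Filter.atTop
        (nhds ((V t) ^ (1 / p))) := by
      have := hSp.add hHp; rwa [add_zero] at this
    have hlo : Filter.Tendsto (fun m => S m ^ (1 / p) - H m ^ (1 / p)) Filter.atTop
        (nhds ((V t) ^ (1 / p))) := by
      have := hSp.sub hHp; rwa [sub_zero] at this
    exact tendsto_of_tendsto_of_tendsto_of_le_of_le hlo hup
      (fun m => by linarith [hmink2 m]) (fun m => hmink1 m)
  -- conclude
  have hV0 : 0 ≤ V t := le_of_tendsto_of_tendsto' tendsto_const_nhds hz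
    (fun m => dyadicPVar_nonneg p z m t)
  have := hTp.rpow_const (p := p) (Or.inr hp0.le)
  have heq : ∀ m : ℕ, (T m ^ (1 / p)) ^ p = T m := fun m => by
    rw [← Real.rpow_mul (dyadicPVar_nonneg p _ m t), one_div,
      inv_mul_cancel₀ (ne_of_gt hp0), Real.rpow_one]
  have hVeq : (V t ^ (1 / p)) ^ p = V t := by
    rw [← Real.rpow_mul hV0, one_div, inv_mul_cancel₀ (ne_of_gt hp0), Real.rpow_one]
  rw [hVeq] at this
  rw [show (fun a : ℕ => (T a ^ (1 / p)) ^ p) = T from funext heq] at this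
  exact this

lemma dyadic_cover (n : ℕ) (t : ℝ) (ht : t ∈ Set.Icc (0 : ℝ) 1) :
    ∃ i : ℕ, i < 2 ^ n ∧ t ∈ Set.Icc ((i : ℝ) / 2 ^ n) (((i : ℝ) + 1) / 2 ^ n) := by
  have h2 : (0 : ℝ) < 2 ^ n := by positivity
  obtain ⟨ht0, ht1⟩ := ht
  have htn : 0 ≤ t * 2 ^ n := by positivity
  have hInt : ((⌊t * 2 ^ n⌋.toNat : ℤ)) = ⌊t * 2 ^ n⌋ :=
    Int.toNat_of_nonneg (Int.floor_nonneg.mpr htn)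
  have hcast : ((⌊t * 2 ^ n⌋.toNat : ℕ) : ℝ) = ((⌊t * 2 ^ n⌋ : ℤ) : ℝ) := by
    exact_mod_cast congrArg (fun z : ℤ => (z : ℝ)) hInt
  by_cases h : ⌊t * 2 ^ n⌋.toNat < 2 ^ n
  · refine ⟨⌊t * 2 ^ n⌋.toNat, h, ?_, ?_⟩
    · rw [div_le_iff₀ h2, hcast]; exact Int.floor_le _
    · rw [le_div_iff₀ h2, hcast]; exact (Int.lt_floor_add_one _).le
  · have h' : (2 ^ n : ℕ) ≤ ⌊t * 2 ^ n⌋.toNat := not_lt.mp h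
    have hsub : (((2 ^ n - 1 : ℕ) : ℕ) : ℝ) = (2 ^ n : ℝ) - 1 := by
      push_cast [Nat.cast_sub Nat.one_le_two_pow]
      ring
    refine ⟨2 ^ n - 1, Nat.sub_lt (Nat.two_pow_pos n) one_pos, ?_, ?_⟩
    · rw [div_le_iff₀ h2, hsub]
      have hfl : (2 : ℝ) ^ n ≤ (⌊t * 2 ^ n⌋ : ℝ) := by
        have hle : ((2 ^ n : ℕ) : ℝ) ≤ ((⌊t * 2 ^ n⌋.toNat : ℕ) : ℝ) := by exact_mod_cast h'
        rw [hcast] at hle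
        push_cast at hle ⊢
        linarith
      calc (2 : ℝ) ^ n - 1 ≤ (⌊t * 2 ^ n⌋ : ℝ) := by linarith
        _ ≤ t * 2 ^ n := Int.floor_le _
    · rw [hsub, show (2 : ℝ) ^ n - 1 + 1 = 2 ^ n by ring, le_div_iff₀ h2]
      nlinarith

/-- if the class `V^{p,τ}_𝕋 ∩ C^α([0,1])` of α-Hölder paths with dyadic
p-th variation `τ` is nonempty (and adding a dyadic piecewise linear function does not
change the dyadic p-th variation), then this class is dense in `C([0,1])` for the
uniform norm. -/
theorem stmt18 (p α : ℝ) (hp : 1 < p) (hα : α ∈ Set.Ioo (0 : ℝ) 1)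
    (τ : ℝ → ℝ) (hτcont : ContinuousOn τ (Set.Icc 0 1))
    (hτmono : MonotoneOn τ (Set.Icc 0 1)) (hτ0 : τ 0 = 0)
    (hne : ∃ y : ℝ → ℝ, ContinuousOn y (Set.Icc 0 1) ∧
      (∃ C : ℝ, ∀ s ∈ Set.Icc (0 : ℝ) 1, ∀ t ∈ Set.Icc (0 : ℝ) 1,
        |y t - y s| ≤ C * |t - s| ^ α) ∧
      ∀ t ∈ Set.Icc (0 : ℝ) 1,
        Filter.Tendsto (fun n => dyadicPVar p y n t) Filter.atTop (nhds (τ t)))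
    (hpl : ∀ (z w : ℝ → ℝ) (n : ℕ) (V : ℝ → ℝ), PiecewiseLinearDyadic w n →
      (∀ t ∈ Set.Icc (0 : ℝ) 1,
        Filter.Tendsto (fun m => dyadicPVar p z m t) Filter.atTop (nhds (V t))) →
      ∀ t ∈ Set.Icc (0 : ℝ) 1,
        Filter.Tendsto (fun m => dyadicPVar p (fun u => z u + w u) m t)
          Filter.atTop (nhds (V t))) :
    ∀ f : ℝ → ℝ, ContinuousOn f (Set.Icc 0 1) → ∀ ε : ℝ, 0 < ε →
      ∃ y : ℝ → ℝ, ContinuousOn y (Set.Icc 0 1) ∧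
        (∃ C : ℝ, ∀ s ∈ Set.Icc (0 : ℝ) 1, ∀ t ∈ Set.Icc (0 : ℝ) 1,
          |y t - y s| ≤ C * |t - s| ^ α) ∧
        (∀ t ∈ Set.Icc (0 : ℝ) 1,
          Filter.Tendsto (fun n => dyadicPVar p y n t) Filter.atTop (nhds (τ t))) ∧
        ∀ t ∈ Set.Icc (0 : ℝ) 1, |f t - y t| < ε := by
  intro f hf ε hε
  obtain ⟨y₀, hy₀c, ⟨C₀, hC₀⟩, hy₀v⟩ := hne
  set g : ℝ → ℝ := fun u => f u - y₀ u with hg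
  have hgc : ContinuousOn g (Set.Icc 0 1) := hf.sub hy₀c
  have hUC : UniformContinuousOn g (Set.Icc 0 1) :=
    isCompact_Icc.uniformContinuousOn_of_continuous hgc
  rw [Metric.uniformContinuousOn_iff] at hUC
  obtain ⟨δ, hδ0, hδ⟩ := hUC (ε / 2) (by linarith)
  obtain ⟨n, hn⟩ : ∃ n : ℕ, (1 : ℝ) / 2 ^ n < δ := by
    obtain ⟨n, hn⟩ := exists_pow_lt_of_lt_one hδ0 (by norm_num : (1 : ℝ) / 2 < 1)
    exact ⟨n, by rwa [div_pow, one_pow] at hn⟩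
  have h2 : (0 : ℝ) < 2 ^ n := by positivity
  obtain ⟨L, hL0, hL⟩ := plInterp_lip g n
  set w : ℝ → ℝ := plInterp g n with hw
  have happrox : ∀ t ∈ Set.Icc (0 : ℝ) 1, |g t - w t| ≤ ε / 2 := by
    intro t ht
    obtain ⟨i, hi, hti⟩ := dyadic_cover n t ht
    rw [hw, plInterp_eval g n i hi t hti]
    set a : ℝ := (i : ℝ) / 2 ^ n with ha
    set b : ℝ := ((i : ℝ) + 1) / 2 ^ n with hb
    set lam : ℝ := (t - a) * 2 ^ n with hlam
    have hia : ((i : ℝ)) ≤ 2 ^ n := by exact_mod_cast hi.le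
    have hib : ((i : ℝ)) + 1 ≤ 2 ^ n := by
      have : (i : ℝ) + 1 = ((i + 1 : ℕ) : ℝ) := by push_cast; ring
      rw [this]; exact_mod_cast hi
    have ha01 : a ∈ Set.Icc (0 : ℝ) 1 := ⟨by positivity, by rw [ha, div_le_one h2]; exact hia⟩
    have hb01 : b ∈ Set.Icc (0 : ℝ) 1 := ⟨by positivity, by rw [hb, div_le_one h2]; exact hib⟩
    have hba : b - a = 1 / 2 ^ n := by rw [ha, hb]; ring
    have hta : |t - a| ≤ 1 / 2 ^ n := by
      rw [abs_of_nonneg (by linarith [hti.1])]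
      linarith [hti.2, hba]
    have htb : |t - b| ≤ 1 / 2 ^ n := by
      rw [abs_of_nonpos (by linarith [hti.2])]
      linarith [hti.1, hba]
    have h1 : |g t - g a| ≤ ε / 2 := by
      have := hδ t ht a ha01 (by rw [Real.dist_eq]; exact hta.trans_lt hn)
      rw [Real.dist_eq] at this; linarith
    have h2' : |g t - g b| ≤ ε / 2 := by
      have := hδ t ht b hb01 (by rw [Real.dist_eq]; exact htb.trans_lt hn)
      rw [Real.dist_eq] at this; linarith
    have hlam0 : 0 ≤ lam := mul_nonneg (by linarith [hti.1]) h2.le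
    have hlam1 : lam ≤ 1 := by
      rw [hlam]
      calc (t - a) * 2 ^ n ≤ (1 / 2 ^ n) * 2 ^ n := by
            have : t - a ≤ 1 / 2 ^ n := by linarith [hti.2, hba]
            gcongr
        _ = 1 := by field_simp
    calc |g t - (g a + (t - a) * 2 ^ n * (g b - g a))|
        = |(1 - lam) * (g t - g a) + lam * (g t - g b)| := by rw [hlam]; congr 1; ring
      _ ≤ |(1 - lam) * (g t - g a)| + |lam * (g t - g b)| := abs_add_le _ _
      _ = (1 - lam) * |g t - g a| + lam * |g t - g b| := by
          rw [abs_mul, abs_mul, abs_of_nonneg (by linarith), abs_of_nonneg hlam0]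
      _ ≤ (1 - lam) * (ε / 2) + lam * (ε / 2) :=
          add_le_add (mul_le_mul_of_nonneg_left h1 (by linarith))
            (mul_le_mul_of_nonneg_left h2' hlam0)
      _ = ε / 2 := by ring
  refine ⟨fun u => y₀ u + w u, hy₀c.add (plInterp_continuous g n).continuousOn,
    ⟨C₀ + L, ?_⟩, ?_, ?_⟩
  · intro s hs t ht
    have hb1 := hC₀ s hs t ht
    have hb2 := hL s t
    have habs1 : |t - s| ≤ 1 := by
      rw [abs_le]; constructor
      · linarith [hs.2, ht.1]
      · linarith [hs.1, ht.2]
    have hpow : |t - s| ≤ |t - s| ^ α := by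
      rcases eq_or_lt_of_le (abs_nonneg (t - s)) with h | h
      · rw [← h, Real.zero_rpow (ne_of_gt hα.1)]
      · calc |t - s| = |t - s| ^ (1 : ℝ) := (Real.rpow_one _).symm
          _ ≤ |t - s| ^ α := Real.rpow_le_rpow_of_exponent_ge h habs1 hα.2.le
    calc |(y₀ t + w t) - (y₀ s + w s)|
        = |(y₀ t - y₀ s) + (w t - w s)| := by congr 1; ring
      _ ≤ |y₀ t - y₀ s| + |w t - w s| := abs_add_le _ _
      _ ≤ C₀ * |t - s| ^ α + L * |t - s| := add_le_add hb1 hb2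
      _ ≤ C₀ * |t - s| ^ α + L * |t - s| ^ α :=
          add_le_add le_rfl (mul_le_mul_of_nonneg_left hpow hL0)
      _ = (C₀ + L) * |t - s| ^ α := by ring
  · intro t ht
    exact add_lip_pvar p hp y₀ w L hL0 hL τ t (hy₀v t ht)
  · intro t ht
    have hap := happrox t ht
    have heq : |f t - (y₀ t + w t)| = |g t - w t| := by rw [hg]; congr 1; ring
    rw [heq]
    linarith
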